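/- Let (Ω, ℙ) be a probability space and let W^1, …, W^{N+1} be exchangeable random trajectories, where each W^j = ((x^j_0, v^j_0), …, (x^j_T, v^j_T)) takes values in (X × Y)^{T+1} for a measurable space X and a normed additive group Y, and exchangeability means the joint law of (W^{σ(1)}, …, W^{σ(N+1)}) equals that of (W^1, …, W^{N+1}) for every permutation σ of {1, …, N+1}. Fix a measurable region S ⊆ X and define for each j the nonconformity score δ^j = max{‖v^j_k‖ : k ∈ {0, …, T}, x^j_k ∈ S} (with δ^j = 0 if the trajectory never visits S). Let α_i ∈ (0, 1), set r = ⌈(N+1)(1−α_i)⌉, suppose r ≤ N, and let η be the r-th smallest value among δ^1, …, δ^N. Then ℙ[∀ k ∈ {0, …, T}, x^{N+1}_k ∈ S → ‖v^{N+1}_k‖ ≤ η] ≥ 1 − α_i. -/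

import Mathlib

open MeasureTheory

/-- The `r`-th order statistic (1-indexed: `r`-th smallest value) of `z 0, …, z (N-1)`. -/
noncomputable def orderStat {N : ℕ} (z : Fin N → ℝ) (r : ℕ) : ℝ :=
  ((List.ofFn z).insertionSort (· ≤ ·)).getD (r - 1) 0

open Finset in
/-- If at most `r - 1` of the `z j` are `< t` (with `1 ≤ r ≤ N`), then `t` is at most the
`r`-th smallest of the `z j`. -/
lemma le_orderStat_of_card_lt_le {N r : ℕ} (z : Fin N → ℝ) (t : ℝ) (hr1 : 1 ≤ r) (hrN : r ≤ N)
    (h : (Finset.univ.filter (fun j => z j < t)).card ≤ r - 1) : t ≤ orderStat z r := by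
  classical
  by_contra hlt
  push_neg at hlt
  set L := (List.ofFn z).insertionSort (· ≤ ·) with hL
  have hlen : L.length = N := by rw [hL, List.length_insertionSort, List.length_ofFn]
  have hsorted : L.Pairwise (· ≤ ·) := List.pairwise_insertionSort _ _
  have hperm : L.Perm (List.ofFn z) := List.perm_insertionSort _ _
  have hr1' : r - 1 < L.length := by omega
  have hgetD : orderStat z r = L[r-1] := List.getD_eq_getElem L 0 hr1'
  -- the count of values `< t` among the `z j`, as a `countP`
  have hcard : L.countP (fun x => decide (x < t)) =
      (Finset.univ.filter (fun j => z j < t)).card := by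
    rw [hperm.countP_eq, List.ofFn_eq_map, List.countP_map, List.countP_eq_length_filter]
    rw [← List.toFinset_card_of_nodup ((List.nodup_finRange N).filter _)]
    congr 1
    ext j
    simp [List.mem_filter]
  have hge : r ≤ L.countP (fun x => decide (x < t)) := by
    have htake : (L.take r).countP (fun x => decide (x < t)) = r := by
      rw [List.countP_eq_length.mpr ?_, List.length_take, hlen, min_eq_left hrN]
      intro a ha
      obtain ⟨i, hi, rfl⟩ := List.mem_iff_getElem.mp ha
      have hi' : i < min r L.length := by simpa [List.length_take] using hi
      have hiN : i < L.length := lt_of_lt_of_le hi' (min_le_right _ _)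
      have hir : i < r := lt_of_lt_of_le hi' (min_le_left _ _)
      have hle : L[i] ≤ L[r-1] := by
        rcases eq_or_lt_of_le (show i ≤ r - 1 by omega) with heq | hlt'
        · exact le_of_eq (by subst heq; rfl)
        · have := List.pairwise_iff_get.mp hsorted ⟨i, hiN⟩ ⟨r-1, hr1'⟩ hlt'
          simpa using this
      simp only [List.getElem_take, decide_eq_true_eq]
      exact lt_of_le_of_lt hle (hgetD ▸ hlt)
    calc r = (L.take r).countP (fun x => decide (x < t)) := htake.symm
      _ ≤ L.countP (fun x => decide (x < t)) := (List.take_sublist r L).countP_le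
  omega

open Finset in
/-- Pigeonhole for ranks: among `n` reals, at least `r` of them have strict rank `≤ r - 1`. -/
lemma pigeonhole_rank {n r : ℕ} (d : Fin n → ℝ) (hr1 : 1 ≤ r) (hrn : r ≤ n) :
    r ≤ (Finset.univ.filter (fun j =>
      (Finset.univ.filter (fun i => d i < d j)).card ≤ r - 1)).card := by
  classical
  set lt' : Fin n → Fin n → Prop := fun i j => d i < d j ∨ (d i = d j ∧ i < j) with hlt
  set f : Fin n → ℕ := fun j => (Finset.univ.filter (fun i => lt' i j)).card with hf
  have hirr : ∀ j, ¬ lt' j j := by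
    intro j hj
    rcases hj with h | ⟨_, h⟩ <;> exact absurd h (lt_irrefl _)
  have htrans : ∀ {i j k}, lt' i j → lt' j k → lt' i k := by
    rintro i j k (h1 | ⟨h1, h1'⟩) (h2 | ⟨h2, h2'⟩)
    · exact Or.inl (h1.trans h2)
    · exact Or.inl (h2 ▸ h1)
    · exact Or.inl (h1 ▸ h2)
    · exact Or.inr ⟨h1.trans h2, h1'.trans h2'⟩
  have hstep : ∀ {j k}, lt' j k → f j < f k := by
    intro j k hjk
    have hsub : insert j (Finset.univ.filter (fun i => lt' i j)) ⊆
        Finset.univ.filter (fun i => lt' i k) := by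
      intro i hi
      rcases Finset.mem_insert.mp hi with rfl | hi
      · simp only [Finset.mem_filter, Finset.mem_univ, true_and]; exact hjk
      · simp only [Finset.mem_filter, Finset.mem_univ, true_and] at hi ⊢
        exact htrans hi hjk
    have hjmem : j ∉ Finset.univ.filter (fun i => lt' i j) := by
      simp only [Finset.mem_filter, Finset.mem_univ, true_and]
      exact hirr j
    calc f j < f j + 1 := Nat.lt_succ_self _
      _ = (insert j (Finset.univ.filter (fun i => lt' i j))).card :=
        (Finset.card_insert_of_notMem hjmem).symm
      _ ≤ _ := Finset.card_le_card hsub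
  have hinj : Function.Injective f := by
    intro j k hjk_eq
    by_contra hne
    have htot : lt' j k ∨ lt' k j := by
      rcases lt_trichotomy (d j) (d k) with h | h | h
      · exact Or.inl (Or.inl h)
      · rcases lt_or_gt_of_ne hne with hi | hi
        · exact Or.inl (Or.inr ⟨h, hi⟩)
        · exact Or.inr (Or.inr ⟨h.symm, hi⟩)
      · exact Or.inr (Or.inl h)
    rcases htot with h | h
    · exact absurd hjk_eq (Nat.ne_of_lt (hstep h))
    · exact absurd hjk_eq.symm (Nat.ne_of_lt (hstep h))
  have hlt_n : ∀ j, f j < n := by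
    intro j
    have hsub : Finset.univ.filter (fun i => lt' i j) ⊆ Finset.univ.erase j := by
      intro i hi
      simp only [Finset.mem_filter, Finset.mem_univ, true_and] at hi
      refine Finset.mem_erase.mpr ⟨?_, Finset.mem_univ i⟩
      rintro rfl; exact hirr i hi
    calc f j ≤ (Finset.univ.erase j).card := Finset.card_le_card hsub
      _ = n - 1 := by
        rw [Finset.card_erase_of_mem (Finset.mem_univ j), Finset.card_univ, Fintype.card_fin]
      _ < n := by omega
  have himg : Finset.univ.image f = Finset.range n := by
    apply Finset.eq_of_subset_of_card_le
    · intro m hm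
      obtain ⟨j, _, rfl⟩ := Finset.mem_image.mp hm
      exact Finset.mem_range.mpr (hlt_n j)
    · rw [Finset.card_range, Finset.card_image_of_injective _ hinj, Finset.card_univ,
        Fintype.card_fin]
  have hcount : (Finset.univ.filter (fun j => f j ≤ r - 1)).card = r := by
    have h1 : ((Finset.univ.image f).filter (fun m => m ≤ r - 1)).card
        = (Finset.univ.filter (fun j => f j ≤ r - 1)).card := by
      rw [Finset.filter_image, Finset.card_image_of_injective _ hinj]
    rw [← h1, himg]
    have h2 : (Finset.range n).filter (fun m => m ≤ r - 1) = Finset.range r := by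
      ext m
      simp only [Finset.mem_filter, Finset.mem_range]
      omega
    rw [h2, Finset.card_range]
  calc r = (Finset.univ.filter (fun j => f j ≤ r - 1)).card := hcount.symm
    _ ≤ _ := by
      apply Finset.card_le_card
      apply Finset.monotone_filter_right
      intro j _ hj
      refine le_trans (Finset.card_le_card ?_) hj
      intro i hi
      simp only [Finset.mem_filter, Finset.mem_univ, true_and] at hi ⊢
      exact Or.inl hi

/-- The region-based nonconformity score as a finite `sup'`. -/
lemma sSup_score_eq_sup' {X Y : Type*} [NormedAddGroup Y] (S : Set X) {T : ℕ}
    [DecidablePred (· ∈ S)] (w : Fin (T + 1) → X × Y) :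
    sSup ((fun k : Fin (T + 1) => ‖(w k).2‖) '' {k | (w k).1 ∈ S}) =
      Finset.univ.sup' Finset.univ_nonempty
        (fun k => if (w k).1 ∈ S then ‖(w k).2‖ else 0) := by
  classical
  by_cases hex : ∃ k, (w k).1 ∈ S
  · obtain ⟨k₀, hk₀⟩ := hex
    have hbdd : BddAbove ((fun k : Fin (T + 1) => ‖(w k).2‖) '' {k | (w k).1 ∈ S}) :=
      (Set.toFinite _).image _ |>.bddAbove
    apply le_antisymm
    · refine csSup_le ⟨‖(w k₀).2‖, k₀, hk₀, rfl⟩ ?_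
      rintro b ⟨k, hk, rfl⟩
      have hk' : (w k).1 ∈ S := hk
      calc ‖(w k).2‖ = if (w k).1 ∈ S then ‖(w k).2‖ else 0 := by rw [if_pos hk']
        _ ≤ _ := Finset.le_sup'
            (f := fun k => if (w k).1 ∈ S then ‖(w k).2‖ else 0) (Finset.mem_univ k)
    · apply Finset.sup'_le
      intro k _
      by_cases hk : (w k).1 ∈ S
      · rw [if_pos hk]
        exact le_csSup hbdd ⟨k, hk, rfl⟩
      · rw [if_neg hk]
        exact le_trans (norm_nonneg (w k₀).2) (le_csSup hbdd ⟨k₀, hk₀, rfl⟩)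
  · push_neg at hex
    have h1 : {k : Fin (T + 1) | (w k).1 ∈ S} = ∅ := Set.eq_empty_iff_forall_notMem.mpr hex
    rw [h1, Set.image_empty, Real.sSup_empty]
    have h2 : ∀ k ∈ Finset.univ, (if (w k).1 ∈ S then ‖(w k).2‖ else 0) = (0 : ℝ) :=
      fun k _ => if_neg (hex k)
    rw [Finset.sup'_congr _ rfl h2, Finset.sup'_const]

open Finset in
/-- Reindexing a filter-count by a permutation. -/
lemma card_filter_comp_equiv {n : ℕ} (P : Fin n → Prop) [DecidablePred P]
    (τ : Equiv.Perm (Fin n)) :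
    (Finset.univ.filter (fun i => P (τ i))).card = (Finset.univ.filter P).card := by
  apply Finset.card_bij (fun i _ => τ i)
  · intro i hi
    simp only [Finset.mem_filter, Finset.mem_univ, true_and] at hi ⊢
    exact hi
  · intro a _ b _ hab
    exact τ.injective hab
  · intro b hb
    simp only [Finset.mem_filter, Finset.mem_univ, true_and] at hb
    exact ⟨τ.symm b, by simp [hb], by simp⟩

/-- Per-region conformal guarantee (Equation (4) of the paper): for `N + 1` exchangeable
random trajectories of states and noises, the conformal quantile `η` of the region-based
nonconformity scores (max noise norm over the time steps at which the trajectory visits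
the region `S`, `0` if `S` is never visited) of the first `N` trajectories bounds, with
probability at least `1 - αi`, the perception error at every time step at which the fresh
trajectory visits `S`. -/
theorem per_region_conformal_guarantee
    {Ω X Y : Type*} [MeasurableSpace Ω] [MeasurableSpace X]
    [NormedAddGroup Y] [MeasurableSpace Y] [OpensMeasurableSpace Y]
    (ℙ : Measure Ω) [IsProbabilityMeasure ℙ]
    (N T : ℕ)
    (W : Fin (N + 1) → Ω → (Fin (T + 1) → X × Y)) (hW : ∀ j, Measurable (W j))
    (hexch : ∀ σ : Equiv.Perm (Fin (N + 1)),
      Measure.map (fun ω => fun j => W (σ j) ω) ℙ =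
        Measure.map (fun ω => fun j => W j ω) ℙ)
    (S : Set X) (hS : MeasurableSet S)
    (δ : Fin (N + 1) → Ω → ℝ)
    (hδ : ∀ j ω, δ j ω =
      sSup ((fun k : Fin (T + 1) => ‖(W j ω k).2‖) '' {k | (W j ω k).1 ∈ S}))
    (αi : ℝ) (hαi : αi ∈ Set.Ioo (0 : ℝ) 1)
    (r : ℕ) (hr : r = ⌈((N : ℝ) + 1) * (1 - αi)⌉₊) (hrN : r ≤ N)
    (η : Ω → ℝ)
    (hη : ∀ ω, η ω = orderStat (fun j : Fin N => δ j.castSucc ω) r) :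
    1 - αi ≤
      (ℙ {ω | ∀ k : Fin (T + 1),
        (W (Fin.last N) ω k).1 ∈ S → ‖(W (Fin.last N) ω k).2‖ ≤ η ω}).toReal := by
  classical
  obtain ⟨hα0, hα1⟩ := hαi
  have hr1 : 1 ≤ r := by
    rw [hr]
    exact Nat.one_le_ceil_iff.mpr (mul_pos (by positivity) (by linarith))
  -- the score function
  set g : (Fin (T + 1) → X × Y) → ℝ := fun w =>
    Finset.univ.sup' Finset.univ_nonempty
      (fun k => if (w k).1 ∈ S then ‖(w k).2‖ else 0) with hgdef
  have hg : Measurable g := by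
    have h := Finset.measurable_sup' (s := (Finset.univ : Finset (Fin (T + 1))))
      Finset.univ_nonempty
      (f := fun k (w : Fin (T + 1) → X × Y) => if (w k).1 ∈ S then ‖(w k).2‖ else 0)
      (fun k _ => Measurable.ite ((measurable_fst.comp (measurable_pi_apply k)) hS)
        (continuous_norm.measurable.comp (measurable_snd.comp (measurable_pi_apply k)))
        measurable_const)
    have heq : g = Finset.univ.sup' Finset.univ_nonempty
        (fun k (w : Fin (T + 1) → X × Y) => if (w k).1 ∈ S then ‖(w k).2‖ else 0) := by
      funext w
      rw [hgdef]
      exact (Finset.sup'_apply (C := fun _ : (Fin (T + 1) → X × Y) => ℝ) Finset.univ_nonempty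
        (fun k (w' : Fin (T + 1) → X × Y) => if (w' k).1 ∈ S then ‖(w' k).2‖ else 0) w).symm
    rw [heq]
    exact h
  have hδg : ∀ j ω, δ j ω = g (W j ω) := fun j ω =>
    (hδ j ω).trans (sSup_score_eq_sup' S (W j ω))
  have hδm : ∀ j, Measurable (δ j) := by
    intro j
    have : δ j = g ∘ (W j) := funext fun ω => hδg j ω
    rw [this]
    exact hg.comp (hW j)
  -- the score vector
  set D : Ω → (Fin (N + 1) → ℝ) := fun ω j => δ j ω with hDdef
  have hD : Measurable D := measurable_pi_lambda _ hδm
  -- exchangeability of the score vector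
  have hDexch : ∀ σ : Equiv.Perm (Fin (N + 1)),
      Measure.map (fun ω => fun j => δ (σ j) ω) ℙ = Measure.map D ℙ := by
    intro σ
    have hG : Measurable (fun (w : Fin (N + 1) → (Fin (T + 1) → X × Y)) (j : Fin (N + 1)) =>
        g (w j)) := measurable_pi_lambda _ fun j => hg.comp (measurable_pi_apply j)
    have hWvec : Measurable (fun ω => fun j : Fin (N + 1) => W j ω) :=
      measurable_pi_lambda _ hW
    have hWvecσ : Measurable (fun ω => fun j : Fin (N + 1) => W (σ j) ω) :=
      measurable_pi_lambda _ fun j => hW (σ j)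
    calc Measure.map (fun ω => fun j => δ (σ j) ω) ℙ
        = Measure.map ((fun w (j : Fin (N + 1)) => g (w j)) ∘ (fun ω j => W (σ j) ω)) ℙ := by
          congr 1
          funext ω
          simp only [Function.comp_apply]
          funext j
          exact hδg (σ j) ω
      _ = Measure.map (fun w (j : Fin (N + 1)) => g (w j))
            (Measure.map (fun ω j => W (σ j) ω) ℙ) := (Measure.map_map hG hWvecσ).symm
      _ = Measure.map (fun w (j : Fin (N + 1)) => g (w j))
            (Measure.map (fun ω j => W j ω) ℙ) := by rw [hexch σ]
      _ = Measure.map ((fun w (j : Fin (N + 1)) => g (w j)) ∘ (fun ω j => W j ω)) ℙ :=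
          Measure.map_map hG hWvec
      _ = Measure.map D ℙ := by
          congr 1
          funext ω
          simp only [Function.comp_apply, hDdef]
          funext j
          exact (hδg j ω).symm
  -- the rank events
  set E : Fin (N + 1) → Set (Fin (N + 1) → ℝ) := fun j =>
    {d | (Finset.univ.filter (fun i => d i < d j)).card ≤ r - 1} with hEdef
  have hEmeas : ∀ j, MeasurableSet (E j) := by
    intro j
    have hcnt : Measurable (fun d : Fin (N + 1) → ℝ =>
        (Finset.univ.filter (fun i => d i < d j)).card) := by
      simp only [Finset.card_filter]
      apply Finset.measurable_sum
      intro i _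
      apply Measurable.ite
      · exact measurableSet_lt (measurable_pi_apply i) (measurable_pi_apply j)
      · exact measurable_const
      · exact measurable_const
    exact hcnt (measurableSet_Iic (a := r - 1))
  -- all rank events have the same probability
  have hAeq : ∀ j, ℙ (D ⁻¹' E j) = ℙ (D ⁻¹' E (Fin.last N)) := by
    intro j
    set τ : Equiv.Perm (Fin (N + 1)) := Equiv.swap j (Fin.last N) with hτ
    have hDτ : Measurable (fun ω => fun i : Fin (N + 1) => δ (τ i) ω) :=
      measurable_pi_lambda _ fun i => hδm (τ i)
    have h1 : D ⁻¹' E j = (fun ω => fun i : Fin (N + 1) => δ (τ i) ω) ⁻¹' E (Fin.last N) := by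
      ext ω
      simp only [Set.mem_preimage, hEdef, Set.mem_setOf_eq, hDdef]
      have hτlast : τ (Fin.last N) = j := Equiv.swap_apply_right _ _
      have := card_filter_comp_equiv (fun i => δ i ω < δ j ω) τ
      rw [← this]
      simp only [hτlast]
    rw [h1, ← Measure.map_apply hDτ (hEmeas (Fin.last N)), hDexch τ,
      Measure.map_apply hD (hEmeas (Fin.last N))]
  -- the sum of the probabilities of the rank events is at least r
  have hsum : (r : ENNReal) ≤ ∑ j : Fin (N + 1), ℙ (D ⁻¹' E j) := by
    have heq : ∀ j : Fin (N + 1), ℙ (D ⁻¹' E j) =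
        ∫⁻ ω, (D ⁻¹' E j).indicator 1 ω ∂ℙ := fun j =>
      (lintegral_indicator_one (hD (hEmeas j))).symm
    calc (r : ENNReal) = ∫⁻ _, (r : ENNReal) ∂ℙ := by
          rw [lintegral_const, measure_univ, mul_one]
      _ ≤ ∫⁻ ω, ∑ j : Fin (N + 1), (D ⁻¹' E j).indicator 1 ω ∂ℙ := by
          apply lintegral_mono
          intro ω
          show (r : ENNReal) ≤ ∑ j : Fin (N + 1), (D ⁻¹' E j).indicator 1 ω
          have hpt : ∑ j : Fin (N + 1), (D ⁻¹' E j).indicator (1 : Ω → ENNReal) ω =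
              ((Finset.univ.filter (fun j : Fin (N + 1) => ω ∈ D ⁻¹' E j)).card : ENNReal) := by
            rw [Finset.card_filter]
            push_cast
            apply Finset.sum_congr rfl
            intro j _
            by_cases hj : ω ∈ D ⁻¹' E j
            · simp [Set.indicator_of_mem hj, hj]
            · simp [Set.indicator_of_notMem hj, hj]
          rw [hpt]
          have hpig := pigeonhole_rank (D ω) hr1 (by omega)
          have hfeq : (Finset.univ.filter (fun j : Fin (N + 1) => ω ∈ D ⁻¹' E j)) =
              (Finset.univ.filter (fun j : Fin (N + 1) =>
                (Finset.univ.filter (fun i => D ω i < D ω j)).card ≤ r - 1)) := by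
            apply Finset.filter_congr
            intro j _
            simp [hEdef]
          rw [hfeq]
          exact_mod_cast Nat.cast_le.mpr hpig
      _ = ∑ j : Fin (N + 1), ∫⁻ ω, (D ⁻¹' E j).indicator 1 ω ∂ℙ :=
          lintegral_finset_sum _ fun j _ => (measurable_one.indicator (hD (hEmeas j)))
      _ = ∑ j : Fin (N + 1), ℙ (D ⁻¹' E j) := by
          exact Finset.sum_congr rfl fun j _ => (heq j).symm
  -- so the last rank event has probability at least r / (N+1)
  have hlast : ((r : ℝ) / (N + 1)) ≤ (ℙ (D ⁻¹' E (Fin.last N))).toReal := by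
    have hsum' : (r : ENNReal) ≤ (N + 1) * ℙ (D ⁻¹' E (Fin.last N)) := by
      calc (r : ENNReal) ≤ ∑ j : Fin (N + 1), ℙ (D ⁻¹' E j) := hsum
        _ = ∑ _j : Fin (N + 1), ℙ (D ⁻¹' E (Fin.last N)) :=
            Finset.sum_congr rfl fun j _ => hAeq j
        _ = (N + 1) * ℙ (D ⁻¹' E (Fin.last N)) := by
            rw [Finset.sum_const, Finset.card_univ, Fintype.card_fin, nsmul_eq_mul]
            push_cast
            ring
    have hne : ℙ (D ⁻¹' E (Fin.last N)) ≠ ⊤ := measure_ne_top ℙ _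
    have htr : (r : ℝ) ≤ ((N : ℝ) + 1) * (ℙ (D ⁻¹' E (Fin.last N))).toReal := by
      have := ENNReal.toReal_mono (by finiteness) hsum'
      rw [ENNReal.toReal_mul] at this
      have h2 : ((N : ENNReal) + 1).toReal = (N : ℝ) + 1 := by
        rw [ENNReal.toReal_add (by simp) (by simp)]; simp
      rw [h2] at this
      simpa using this
    rw [div_le_iff₀ (by positivity)]
    linarith [htr]
  -- the rank event implies the score bound event
  have hsub : D ⁻¹' E (Fin.last N) ⊆ {ω | ∀ k : Fin (T + 1),
      (W (Fin.last N) ω k).1 ∈ S → ‖(W (Fin.last N) ω k).2‖ ≤ η ω} := by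
    intro ω hω
    simp only [Set.mem_preimage, hEdef, Set.mem_setOf_eq, hDdef] at hω
    -- the count among the first N trajectories is also ≤ r - 1
    have hcount : (Finset.univ.filter (fun j : Fin N =>
        δ j.castSucc ω < δ (Fin.last N) ω)).card ≤ r - 1 := by
      refine le_trans ?_ hω
      apply Finset.card_le_card_of_injOn (fun j => j.castSucc)
      · intro j hj
        simp only [Finset.mem_coe, Finset.mem_filter, Finset.mem_univ, true_and] at hj ⊢
        exact hj
      · exact fun a _ b _ hab => Fin.castSucc_injective N hab
    have hδη : δ (Fin.last N) ω ≤ η ω := by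
      rw [hη ω]
      exact le_orderStat_of_card_lt_le _ _ hr1 hrN hcount
    intro k hk
    refine le_trans ?_ hδη
    rw [hδ (Fin.last N) ω]
    exact le_csSup ((Set.toFinite _).image _ |>.bddAbove) ⟨k, hk, rfl⟩
  -- conclude
  have hmono : (ℙ (D ⁻¹' E (Fin.last N))).toReal ≤
      (ℙ {ω | ∀ k : Fin (T + 1),
        (W (Fin.last N) ω k).1 ∈ S → ‖(W (Fin.last N) ω k).2‖ ≤ η ω}).toReal :=
    ENNReal.toReal_mono (measure_ne_top ℙ _) (measure_mono hsub)
  have hceil : ((N : ℝ) + 1) * (1 - αi) ≤ r := by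
    rw [hr]
    exact Nat.le_ceil _
  have hfrac : 1 - αi ≤ (r : ℝ) / (N + 1) := by
    rw [le_div_iff₀ (by positivity)]
    linarith [hceil]
  linarith [hfrac, hlast, hmono]
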